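/- arXiv:1505.06288 — 2 statements merged into one kernel-verified Lean document; each statement's English description precedes it below -/
import Mathlib

section
/- For a compact linear operator T on an infinite-dimensional Banach space and a nonzero eigenvalue μ of T, the generalized eigenspace N((T−μ)^α) is finite dimensional for every natural number α. -/
/-- Auxiliary: `(T - μ)^α = T ∘ P + (-μ)^α • 1` for some operator `P`. -/
lemma aux_pow_decomp {V : Type*} [NormedAddCommGroup V] [NormedSpace ℂ V]
    (T : V →L[ℂ] V) (μ : ℂ) (α : ℕ) :
    ∃ P : V →L[ℂ] V, (T - μ • (1 : V →L[ℂ] V)) ^ α = T * P + ((-μ) ^ α) • 1 := by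
  induction α with
  | zero => exact ⟨0, by simp⟩
  | succ n ih =>
    obtain ⟨P, hP⟩ := ih
    refine ⟨P * (T - μ • 1) + ((-μ) ^ n) • 1, ?_⟩
    rw [pow_succ, hP]
    simp only [mul_add, add_mul, mul_sub, sub_mul, smul_mul_assoc, mul_smul_comm, pow_succ,
      one_mul, mul_one, smul_smul, mul_assoc]
    module

/-- generalized eigenspaces of a compact operator at a nonzero
eigenvalue are finite dimensional. -/
theorem stmt_2 {V : Type*} [NormedAddCommGroup V] [NormedSpace ℂ V] [CompleteSpace V]
    (hinf : ¬ FiniteDimensional ℂ V)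
    (T : V →L[ℂ] V) (hT : IsCompactOperator T)
    (μ : ℂ) (hμ : μ ≠ 0) (heig : ∃ u : V, u ≠ 0 ∧ T u = μ • u) (α : ℕ) :
    FiniteDimensional ℂ
      (LinearMap.ker (((T - μ • (1 : V →L[ℂ] V)) ^ α : V →L[ℂ] V) : V →ₗ[ℂ] V)) := by
  obtain ⟨P, hP⟩ := aux_pow_decomp T μ α
  set S : V →L[ℂ] V := (T - μ • (1 : V →L[ℂ] V)) ^ α with hS
  set K : Submodule ℂ V := LinearMap.ker ((S : V →L[ℂ] V) : V →ₗ[ℂ] V) with hK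
  have hc : (-μ) ^ α ≠ 0 := pow_ne_zero _ (neg_ne_zero.mpr hμ)
  set G : V →L[ℂ] V := (((-μ) ^ α)⁻¹) • (-(T.comp P)) with hG
  -- G is a compact operator
  have hGc : IsCompactOperator G := ((hT.comp_clm P).neg).smul _
  -- G fixes K pointwise
  have hfix : ∀ x ∈ K, G x = x := by
    intro x hx
    have hx' : S x = 0 := hx
    have h1 : T (P x) + ((-μ) ^ α) • x = 0 := by
      have h2 := congrArg (fun f : V →L[ℂ] V => f x) hP
      simp only [hS] at hx'
      simpa [show S x = 0 from hx'] using h2.symm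
    have hxe : ((-μ) ^ α) • x = -(T (P x)) := by
      rw [eq_neg_iff_add_eq_zero, add_comm]; exact h1
    calc G x = (((-μ) ^ α)⁻¹) • (-(T (P x))) := by simp [hG]
      _ = (((-μ) ^ α)⁻¹) • (((-μ) ^ α) • x) := by rw [hxe]
      _ = x := by rw [smul_smul, inv_mul_cancel₀ hc, one_smul]
  -- the closed unit ball of K is compact
  have hKclosed : IsClosed ((K : Submodule ℂ V) : Set V) := ContinuousLinearMap.isClosed_ker S
  obtain ⟨C, hCcomp, hCsub⟩ := hGc.image_closedBall_subset_compact 1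
  have hball : IsCompact (Metric.closedBall (0 : K) 1) := by
    have hemb : Topology.IsClosedEmbedding ((↑) : K → V) :=
      hKclosed.isClosedEmbedding_subtypeVal
    have hsub : Metric.closedBall (0 : K) 1 ⊆ ((↑) : K → V) ⁻¹' C := by
      intro x hx
      have hxK : (x : V) ∈ K := x.2
      have hnorm : (x : V) ∈ Metric.closedBall (0 : V) 1 := by
        simpa [Metric.mem_closedBall, dist_eq_norm] using hx
      have : G (x : V) ∈ C := hCsub ⟨x, hnorm, rfl⟩
      simpa [hfix _ hxK] using this
    exact IsCompact.of_isClosed_subset (hemb.isCompact_preimage hCcomp)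
      Metric.isClosed_closedBall hsub
  exact FiniteDimensional.of_isCompact_closedBall₀ ℂ one_pos hball
end

section
/- Let T be a compact operator on a complex Banach space and μ ≠ 0. Then there exists a smallest natural number α (the ascent of μ) such that ker((T−μI)^α) = ker((T−μI)^{α+1}). -/
open Metric

/-- Key step: the kernels of powers of `T - μ` eventually stabilize. -/
theorem exists_ker_pow_eq {V : Type*} [NormedAddCommGroup V] [NormedSpace ℂ V]
    (T : V →L[ℂ] V) (hT : IsCompactOperator T) (μ : ℂ) (hμ : μ ≠ 0) :
    ∃ n : ℕ,
      LinearMap.ker (((T - μ • (1 : V →L[ℂ] V)) ^ n : V →L[ℂ] V) : V →ₗ[ℂ] V) =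
      LinearMap.ker (((T - μ • (1 : V →L[ℂ] V)) ^ (n + 1) : V →L[ℂ] V) : V →ₗ[ℂ] V) := by
  by_contra hcon
  push_neg at hcon
  set S : V →L[ℂ] V := T - μ • 1 with hS
  set N : ℕ → Submodule ℂ V := fun n =>
    LinearMap.ker (((S ^ n : V →L[ℂ] V)) : V →ₗ[ℂ] V) with hN
  have hmemN : ∀ n x, x ∈ N n ↔ (S ^ n) x = 0 := fun n x => Iff.rfl
  have hmono : ∀ n, N n ≤ N (n + 1) := by
    intro n x hx
    rw [hmemN] at hx ⊢
    rw [pow_succ']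
    simp [hx, ContinuousLinearMap.mul_apply]
  have hNmono : Monotone N := monotone_nat_of_le_succ hmono
  have hcomm : ∀ (n : ℕ) (y : V), (S ^ n) (S y) = S ((S ^ n) y) := by
    intro n y
    have h1 : (S ^ (n+1)) y = (S ^ n) (S y) := by
      rw [pow_succ]; rfl
    have h2 : (S ^ (n+1)) y = S ((S ^ n) y) := by
      rw [pow_succ']; rfl
    rw [← h1, h2]
  have hclosed : ∀ n, IsClosed ((N n : Set V)) := fun n =>
    ContinuousLinearMap.isClosed_ker (S ^ n)
  -- strictly bigger element at each step
  have hex : ∀ n, ∃ x : V, x ∈ N (n + 1) ∧ x ∉ N n := by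
    intro n
    by_contra h
    push_neg at h
    exact hcon n (le_antisymm (hmono n) (fun x hx => h x hx))
  -- Riesz lemma inside N (n+1)
  have hriesz : ∀ n, ∃ x : V, x ∈ N (n + 1) ∧ ‖x‖ ≤ 3 ∧ ∀ y ∈ N n, 1 ≤ ‖x - y‖ := by
    intro n
    obtain ⟨z, hz1, hz0⟩ := hex n
    set E := ↥(N (n + 1))
    set F : Submodule ℂ E := (N n).comap (N (n + 1)).subtype with hF
    have hFc : IsClosed (F : Set E) :=
      (hclosed n).preimage continuous_subtype_val
    have hFne : ∃ x : E, x ∉ F := ⟨⟨z, hz1⟩, hz0⟩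
    have hc : (1 : ℝ) < ‖(2 : ℂ)‖ := by norm_num
    have hR : ‖(2 : ℂ)‖ < (3 : ℝ) := by norm_num
    obtain ⟨x₀, hx₀R, hx₀⟩ := riesz_lemma_of_norm_lt hc hR hFc hFne
    refine ⟨(x₀ : V), x₀.2, hx₀R, fun y hy => ?_⟩
    have hyE : (⟨y, hmono n hy⟩ : E) ∈ F := hy
    have := hx₀ _ hyE
    exact this
  choose x hxN hxB hxsep using hriesz
  -- separation of images
  have hTx : ∀ m n : ℕ, m < n → ‖μ‖ ≤ ‖T (x n) - T (x m)‖ := by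
    intro m n hmn
    have hSx : S (x n) ∈ N n := by
      rw [hmemN]
      have : (S ^ (n+1)) (x n) = 0 := (hmemN _ _).1 (hxN n)
      rw [pow_succ] at this
      simpa [ContinuousLinearMap.mul_apply] using this
    have hTm : T (x m) ∈ N n := by
      have h1 : T (x m) = S (x m) + μ • (x m) := by
        simp [hS, ContinuousLinearMap.sub_apply, ContinuousLinearMap.smul_apply]
      have hxm : x m ∈ N n := hNmono (Nat.succ_le_of_lt hmn) (hxN m)
      have hSxm : S (x m) ∈ N n := by
        rw [hmemN, hcomm]
        have : (S ^ n) (x m) = 0 := (hmemN _ _).1 hxm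
        simp [this]
      rw [h1]
      exact (N n).add_mem hSxm ((N n).smul_mem μ hxm)
    -- T x = μ x + S x
    set z : V := -(μ⁻¹ • (S (x n) - T (x m))) with hz
    have hzN : z ∈ N n := by
      apply (N n).neg_mem
      exact (N n).smul_mem _ ((N n).sub_mem hSx hTm)
    have hkey : T (x n) - T (x m) = μ • (x n - z) := by
      rw [hz]
      have h1 : T (x n) = μ • (x n) + S (x n) := by
        simp only [hS, ContinuousLinearMap.sub_apply, ContinuousLinearMap.smul_apply,
          ContinuousLinearMap.one_apply]
        abel
      rw [h1, smul_sub, smul_neg, smul_smul, mul_inv_cancel₀ hμ, one_smul]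
      abel
    rw [hkey, norm_smul]
    have := hxsep n z hzN
    calc ‖μ‖ = ‖μ‖ * 1 := by ring
    _ ≤ ‖μ‖ * ‖x n - z‖ := by
        apply mul_le_mul_of_nonneg_left this (norm_nonneg μ)
  -- compactness contradiction
  obtain ⟨K, hK, hsub⟩ :=
    (isCompactOperator_iff_image_closedBall_subset_compact (T : V →ₗ[ℂ] V)
      (by norm_num : (0:ℝ) < 3)).mp hT
  have hmem : ∀ n, T (x n) ∈ K := fun n =>
    hsub ⟨x n, by simpa [mem_closedBall, dist_eq_norm] using hxB n, rfl⟩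
  obtain ⟨a, -, φ, hφ, hconv⟩ := hK.tendsto_subseq hmem
  have hμpos : (0:ℝ) < ‖μ‖ := norm_pos_iff.mpr hμ
  have hcauchy := hconv.cauchySeq
  rw [Metric.cauchySeq_iff] at hcauchy
  obtain ⟨NN, hNN⟩ := hcauchy ‖μ‖ hμpos
  have h1 : dist (T (x (φ (NN+1)))) (T (x (φ NN))) < ‖μ‖ := hNN (NN+1) (by omega) NN le_rfl
  have h2 : ‖μ‖ ≤ ‖T (x (φ (NN+1))) - T (x (φ NN))‖ :=
    hTx (φ NN) (φ (NN+1)) (hφ (by omega))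
  rw [dist_eq_norm] at h1
  linarith

/-- existence of a smallest ascent for a compact operator at μ ≠ 0. -/
theorem stmt_3 {V : Type*} [NormedAddCommGroup V] [NormedSpace ℂ V] [CompleteSpace V]
    (T : V →L[ℂ] V) (hT : IsCompactOperator T) (μ : ℂ) (hμ : μ ≠ 0) :
    ∃ α : ℕ,
      (LinearMap.ker (((T - μ • (1 : V →L[ℂ] V)) ^ α : V →L[ℂ] V) : V →ₗ[ℂ] V) =
       LinearMap.ker (((T - μ • (1 : V →L[ℂ] V)) ^ (α + 1) : V →L[ℂ] V) : V →ₗ[ℂ] V)) ∧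
      ∀ β : ℕ,
        (LinearMap.ker (((T - μ • (1 : V →L[ℂ] V)) ^ β : V →L[ℂ] V) : V →ₗ[ℂ] V) =
         LinearMap.ker (((T - μ • (1 : V →L[ℂ] V)) ^ (β + 1) : V →L[ℂ] V) : V →ₗ[ℂ] V)) →
        α ≤ β := by
  classical
  have h := exists_ker_pow_eq T hT μ hμ
  exact ⟨Nat.find h, Nat.find_spec h, fun β hβ => Nat.find_le hβ⟩
end
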